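/- Let C be a ℤ-submodule of (ℤ/3ℤ)^n with dual code C^⊥ = {y ∈ (ℤ/3ℤ)^n : ∑ᵢ yᵢxᵢ = 0 for all x ∈ C}. Then for every real q with 0 ≤ q < 1, ∑_{x ∈ Λ_A(C^⊥)} q^{‖x‖₁} = (1/|C|) · ∑_{c ∈ C} ((1+q)/(1−q))^{n − |c|} ((1−q²)/(1+q+q²))^{|c|}, where |c| = #{i : cᵢ ≠ 0} is the Hamming weight of c. -/

import Mathlib

open Finset

section Aux

lemma summable_pi_prod {n : ℕ} (g : Fin n → ℤ → ℝ) (hg : ∀ i, Summable (g i))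
    (h0 : ∀ i m, 0 ≤ g i m) :
    Summable fun x : Fin n → ℤ => ∏ i, g i (x i) := by
  induction n with
  | zero => exact Summable.of_finite
  | succ n ih =>
    have h1 : Summable fun x : Fin n → ℤ => ∏ i : Fin n, g i.succ (x i) :=
      ih (fun i => g i.succ) (fun i => hg _) (fun i m => h0 _ _)
    have h3 : 0 ≤ g 0 := fun m => h0 _ _
    have h4 : (0 : (Fin n → ℤ) → ℝ) ≤ fun x => ∏ i : Fin n, g i.succ (x i) :=
      fun x => Finset.prod_nonneg fun i _ => h0 _ _
    have key := Summable.mul_of_nonneg (f := g 0)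
      (g := fun x : Fin n → ℤ => ∏ i : Fin n, g i.succ (x i)) (hg 0) h1 h3 h4
    rw [← (Fin.consEquiv (fun _ : Fin (n+1) => ℤ)).summable_iff]
    refine key.congr fun p => ?_
    simp [Fin.prod_univ_succ, Fin.consEquiv]

lemma tsum_pi_prod {n : ℕ} (f : Fin n → ℤ → ℂ) (hf : ∀ i, Summable fun m => ‖f i m‖) :
    ∑' x : Fin n → ℤ, ∏ i, f i (x i) = ∏ i, ∑' m, f i m := by
  induction n with
  | zero => simp
  | succ n ih =>
    rw [← (Fin.consEquiv (fun _ : Fin (n+1) => ℤ)).tsum_eq]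
    have htail : Summable fun x : Fin n → ℤ => ‖∏ i : Fin n, f i.succ (x i)‖ := by
      have := summable_pi_prod (fun i m => ‖f i.succ m‖) (fun i => hf _)
        (fun i m => norm_nonneg _)
      refine this.congr fun x => ?_
      rw [norm_prod]
    have hmul := tsum_mul_tsum_of_summable_norm (f := f 0)
      (g := fun x : Fin n → ℤ => ∏ i : Fin n, f i.succ (x i)) (hf 0) htail
    calc ∑' p : ℤ × (Fin n → ℤ), ∏ i, f i (Fin.consEquiv (fun _ => ℤ) p i)
        = ∑' p : ℤ × (Fin n → ℤ), f 0 p.1 * ∏ i : Fin n, f i.succ (p.2 i) := by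
          refine tsum_congr fun p => ?_
          simp [Fin.prod_univ_succ, Fin.consEquiv]
      _ = (∑' m, f 0 m) * ∑' x : Fin n → ℤ, ∏ i : Fin n, f i.succ (x i) := hmul.symm
      _ = ∏ i, ∑' m, f i m := by
          rw [ih (fun i => f i.succ) (fun i => hf _), Fin.prod_univ_succ]

lemma summable_int_qpow {q : ℝ} (hq0 : 0 ≤ q) (hq1 : q < 1) :
    Summable fun m : ℤ => q ^ m.natAbs := by
  apply Summable.of_nat_of_neg_add_one
  · exact (summable_geometric_of_lt_one hq0 hq1).congr (by simp)
  · refine ((summable_geometric_of_lt_one hq0 hq1).mul_left q).congr fun k => ?_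
    have : (-(k+1) : ℤ).natAbs = k + 1 := by omega
    rw [this, pow_succ, mul_comm]

set_option maxHeartbeats 1000000 in
lemma tsum_int_qpow_zpow {q : ℝ} (hq0 : 0 ≤ q) (hq1 : q < 1) {z : ℂ} (hz : ‖z‖ = 1) :
    ∑' m : ℤ, (q : ℂ) ^ m.natAbs * z ^ m = (1 - q^2) / ((1 - q*z)*(1 - q*z⁻¹)) := by
  have hz0 : z ≠ 0 := by intro h; rw [h] at hz; simp at hz
  have hr : ‖(q:ℂ)*z‖ < 1 := by
    rw [norm_mul, hz, mul_one, Complex.norm_real, Real.norm_of_nonneg hq0]; exact hq1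
  have hs : ‖(q:ℂ)*z⁻¹‖ < 1 := by
    rw [norm_mul, norm_inv, hz, inv_one, mul_one, Complex.norm_real,
      Real.norm_of_nonneg hq0]; exact hq1
  have h1r : (1 : ℂ) - q*z ≠ 0 := by
    intro h
    have : (q:ℂ)*z = 1 := by linear_combination -h
    rw [this] at hr; simp at hr
  have h1s : (1 : ℂ) - q*z⁻¹ ≠ 0 := by
    intro h
    have : (q:ℂ)*z⁻¹ = 1 := by linear_combination -h
    rw [this] at hs; simp at hs
  have hpos : HasSum (fun k : ℕ => (q:ℂ) ^ (k : ℤ).natAbs * z ^ (k : ℤ))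
      (1 - (q:ℂ)*z)⁻¹ := by
    refine ((hasSum_geometric_of_norm_lt_one hr).congr_fun fun k => ?_)
    rw [mul_pow, Int.natAbs_natCast, zpow_natCast]
  have hneg : HasSum (fun k : ℕ => (q:ℂ) ^ (-(k+1) : ℤ).natAbs * z ^ (-(k+1) : ℤ))
      ((q:ℂ)*z⁻¹ * (1 - (q:ℂ)*z⁻¹)⁻¹) := by
    refine ((hasSum_geometric_of_norm_lt_one hs).mul_left ((q:ℂ)*z⁻¹)).congr_fun fun k => ?_
    have h1 : (-(k+1) : ℤ).natAbs = k + 1 := by omega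
    rw [h1, zpow_neg, show ((k:ℤ)+1) = ((k+1 : ℕ) : ℤ) by push_cast; ring, zpow_natCast,
      ← inv_pow, pow_succ, pow_succ, mul_pow]
    ring
  rw [(HasSum.of_nat_of_neg_add_one (f := fun m : ℤ => (q:ℂ) ^ m.natAbs * z ^ m)
    hpos hneg).tsum_eq]
  have hzz : z * z⁻¹ = 1 := mul_inv_cancel₀ hz0
  have gen : ∀ r s : ℂ, 1 - r ≠ 0 → 1 - s ≠ 0 →
      (1 - r)⁻¹ + s * (1 - s)⁻¹ = (1 - r*s)/((1 - r)*(1 - s)) := by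
    intro r s hr' hs'
    field_simp
    ring
  rw [gen _ _ h1r h1s, show ((q:ℂ)*z)*((q:ℂ)*z⁻¹) = (q:ℂ)^2 * (z*z⁻¹) by ring, hzz, mul_one]

noncomputable def zeta3 : ℂ := Complex.exp (2 * Real.pi * Complex.I / 3)

lemma zeta3_prim : IsPrimitiveRoot zeta3 3 := Complex.isPrimitiveRoot_exp 3 (by norm_num)

lemma zeta3_pow : zeta3 ^ 3 = 1 := zeta3_prim.pow_eq_one

noncomputable def psi3 : AddChar (ZMod 3) ℂ := AddChar.zmodChar 3 zeta3_pow

lemma psi3_norm (a : ZMod 3) : ‖psi3 a‖ = 1 := by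
  rw [psi3, AddChar.zmodChar_apply, norm_pow]
  have : ‖zeta3‖ = 1 := by
    rw [zeta3, Complex.norm_exp]; norm_num
  rw [this, one_pow]

lemma psi3_eq_one_iff {a : ZMod 3} (h : psi3 a = 1) : a = 0 := by
  rw [psi3, AddChar.zmodChar_apply] at h
  have := (zeta3_prim.pow_eq_one_iff_dvd a.val).mp h
  have hv : a.val < 3 := a.val_lt
  have : a.val = 0 := by omega
  exact (ZMod.val_eq_zero a).mp this

lemma zeta3_sum : 1 + zeta3 + zeta3 ^ 2 = 0 := by
  have := zeta3_prim.geom_sum_eq_zero (by norm_num)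
  simpa [Finset.sum_range_succ] using this

lemma psi3_add_inv {a : ZMod 3} (ha : a ≠ 0) : psi3 a + (psi3 a)⁻¹ = -1 := by
  have hav : a = 1 ∨ a = 2 := by
    have h' : ∀ b : ZMod 3, b ≠ 0 → b = 1 ∨ b = 2 := by decide
    exact h' a ha
  have hz : zeta3 * zeta3 ^ 2 = 1 := by
    rw [← pow_succ']; exact zeta3_pow
  have hinv1 : zeta3⁻¹ = zeta3 ^ 2 := inv_eq_of_mul_eq_one_right hz
  have hinv2 : (zeta3 ^ 2)⁻¹ = zeta3 := by
    rw [inv_eq_iff_eq_inv, hinv1]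
  rcases hav with h | h <;> subst h <;>
    simp only [psi3, AddChar.zmodChar_apply] <;>
    [rw [show (1 : ZMod 3).val = 1 from rfl]; rw [show (2 : ZMod 3).val = 2 from rfl]]
  · rw [pow_one, hinv1]; linear_combination zeta3_sum
  · rw [hinv2]; linear_combination zeta3_sum

lemma char_orth {n : ℕ} (C : Submodule ℤ (Fin n → ZMod 3)) [Fintype C]
    (v : Fin n → ZMod 3) [Decidable (∀ z ∈ C, ∑ i, v i * z i = 0)] :
    ∑ c : C, psi3 (∑ i, v i * (c : Fin n → ZMod 3) i)
      = if (∀ z ∈ C, ∑ i, v i * z i = 0) then (Fintype.card C : ℂ) else 0 := by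
  let L : C →+ ZMod 3 :=
    { toFun := fun c => ∑ i, v i * (c : Fin n → ZMod 3) i
      map_zero' := by simp
      map_add' := by intro a b; simp [mul_add, Finset.sum_add_distrib] }
  have hiff : (psi3.compAddMonoidHom L = 0) ↔ (∀ z ∈ C, ∑ i, v i * z i = 0) := by
    rw [AddChar.eq_zero_iff]
    constructor
    · intro h z hz
      exact psi3_eq_one_iff (h ⟨z, hz⟩)
    · intro h c
      have hc : L c = 0 := h c c.2
      rw [AddChar.compAddMonoidHom_apply, hc, AddChar.map_zero_eq_one]
  calc ∑ c : C, psi3 (∑ i, v i * (c : Fin n → ZMod 3) i)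
      = ∑ c : C, (psi3.compAddMonoidHom L) c := rfl
    _ = if psi3.compAddMonoidHom L = 0 then (Fintype.card C : ℂ) else 0 :=
        AddChar.sum_eq_ite _
    _ = _ := by rw [if_congr hiff rfl rfl]

lemma hval {q : ℝ} (hq0 : 0 ≤ q) (hq1 : q < 1) (a : ZMod 3) :
    ∑' m : ℤ, (q : ℂ) ^ m.natAbs * psi3 ((m : ZMod 3) * a)
      = (1 - (q:ℂ)^2) / ((1 - q*(psi3 a))*(1 - q*(psi3 a)⁻¹)) := by
  have key : ∀ m : ℤ, psi3 ((m : ZMod 3) * a) = (psi3 a) ^ m := by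
    intro m
    rw [← zsmul_eq_mul, AddChar.map_zsmul_eq_zpow]
  rw [tsum_congr fun m => by rw [key m]]
  exact tsum_int_qpow_zpow hq0 hq1 (psi3_norm a)

lemma hval0 {q : ℝ} (hq0 : 0 ≤ q) (hq1 : q < 1) :
    ∑' m : ℤ, (q : ℂ) ^ m.natAbs * psi3 ((m : ZMod 3) * 0)
      = (((1+q)/(1-q) : ℝ) : ℂ) := by
  rw [hval hq0 hq1 0, AddChar.map_zero_eq_one]
  have hq : (1:ℂ) - q ≠ 0 := by
    intro h
    have : (q : ℂ) = 1 := by linear_combination -h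
    rw [Complex.ofReal_eq_one] at this; linarith
  push_cast
  rw [inv_one, mul_one]
  field_simp
  ring

lemma hval1 {q : ℝ} (hq0 : 0 ≤ q) (hq1 : q < 1) {a : ZMod 3} (ha : a ≠ 0) :
    ∑' m : ℤ, (q : ℂ) ^ m.natAbs * psi3 ((m : ZMod 3) * a)
      = (((1 - q^2)/(1+q+q^2) : ℝ) : ℂ) := by
  rw [hval hq0 hq1 a]
  have hne : psi3 a ≠ 0 := by
    intro h
    have := psi3_norm a
    rw [h] at this; simp at this
  have hden : (1 - (q:ℂ)*(psi3 a))*(1 - q*(psi3 a)⁻¹) = 1 + q + q^2 := by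
    have hzz : psi3 a * (psi3 a)⁻¹ = 1 := mul_inv_cancel₀ hne
    have hsum := psi3_add_inv ha
    linear_combination (-(q:ℂ))*hsum + (q:ℂ)^2 * hzz
  rw [hden]
  push_cast
  ring

lemma addChar_map_sum {ι : Type*} (ψ : AddChar (ZMod 3) ℂ) (s : Finset ι) (f : ι → ZMod 3) :
    ψ (∑ i ∈ s, f i) = ∏ i ∈ s, ψ (f i) := by
  classical
  induction s using Finset.induction with
  | empty => simp [AddChar.map_zero_eq_one]
  | insert _ _ hnotmem ih =>
    rw [Finset.sum_insert hnotmem, Finset.prod_insert hnotmem, AddChar.map_add_eq_mul, ih]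

end Aux

/-- Theorem: ℓ¹-theta function of the Construction A lattice of the dual of a
ternary code, via the Hamming weight enumerator. -/
theorem theta_one_constructionA_ternary_dual
    (n : ℕ) (C : Submodule ℤ (Fin n → ZMod 3))
    (q : ℝ) (hq0 : 0 ≤ q) (hq1 : q < 1) :
    (∑' x : {x : Fin n → ℤ //
        ∀ z ∈ C, ∑ i, ((x i : ℤ) : ZMod 3) * z i = 0},
        q ^ (∑ i, (x.val i).natAbs))
      = (1 / (Nat.card C : ℝ)) *
        ∑' c : C,
          ((1 + q) / (1 - q)) ^ (n - (Finset.univ.filter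
              fun i => ((c : Fin n → ZMod 3)) i ≠ 0).card) *
          ((1 - q ^ 2) / (1 + q + q ^ 2)) ^ (Finset.univ.filter
              fun i => ((c : Fin n → ZMod 3)) i ≠ 0).card := by
  classical
  letI : Fintype C := Fintype.ofFinite _
  set H0 : ℝ := (1 + q) / (1 - q) with hH0
  set H1 : ℝ := (1 - q ^ 2) / (1 + q + q ^ 2) with hH1
  set v : (Fin n → ℤ) → (Fin n → ZMod 3) := fun x i => ((x i : ℤ) : ZMod 3) with hv
  set s : Set (Fin n → ℤ) := {x | ∀ z ∈ C, ∑ i, v x i * z i = 0} with hs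
  set Fr : (Fin n → ℤ) → ℝ := fun x => q ^ (∑ i, (x i).natAbs) with hFrdef
  set Fc : (Fin n → ℤ) → ℂ := fun x => (q : ℂ) ^ (∑ i, (x i).natAbs) with hFcdef
  have hFr : Summable Fr := by
    have := summable_pi_prod (n := n) (fun _ m => q ^ m.natAbs)
      (fun _ => summable_int_qpow hq0 hq1) (fun _ m => pow_nonneg hq0 _)
    refine this.congr fun x => ?_
    rw [Finset.prod_pow_eq_pow_sum]
  have hFcnorm : ∀ x, ‖Fc x‖ = Fr x := by
    intro x
    rw [hFcdef, hFrdef]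
    simp only [norm_pow, Complex.norm_real, Real.norm_of_nonneg hq0]
  -- weight
  set w : C → ℕ := fun c => (Finset.univ.filter
      fun i => ((c : Fin n → ZMod 3)) i ≠ 0).card with hw
  have cardC_ne : (Fintype.card C : ℂ) ≠ 0 := by
    exact_mod_cast Fintype.card_ne_zero
  -- the complex-valued computation
  have main : (↑(∑' x : s, Fr x) : ℂ)
      = (Fintype.card C : ℂ)⁻¹ * ∑ c : C, (H0 : ℂ) ^ (n - w c) * (H1 : ℂ) ^ (w c) := by
    rw [Complex.ofReal_tsum]
    calc ∑' x : s, ((Fr x : ℝ) : ℂ)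
        = ∑' x : s, Fc x := by
          refine tsum_congr fun x => ?_
          rw [hFcdef, hFrdef]; push_cast; ring
      _ = ∑' x : Fin n → ℤ, s.indicator Fc x := tsum_subtype s Fc
      _ = ∑' x : Fin n → ℤ, (Fintype.card C : ℂ)⁻¹ *
            ∑ c : C, Fc x * psi3 (∑ i, v x i * (c : Fin n → ZMod 3) i) := by
          refine tsum_congr fun x => ?_
          rw [← Finset.mul_sum, char_orth C (v x)]
          by_cases hx : ∀ z ∈ C, ∑ i, v x i * z i = 0
          · rw [if_pos hx, Set.indicator_of_mem (by exact hx) Fc]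
            field_simp
          · rw [if_neg hx, Set.indicator_of_notMem (by exact hx) Fc]
            ring
      _ = (Fintype.card C : ℂ)⁻¹ * ∑ c : C,
            ∑' x : Fin n → ℤ, Fc x * psi3 (∑ i, v x i * (c : Fin n → ZMod 3) i) := by
          rw [tsum_mul_left]
          congr 1
          refine Summable.tsum_finsetSum fun c _ => ?_
          refine Summable.of_norm ?_
          refine hFr.congr fun x => ?_
          rw [norm_mul, psi3_norm, mul_one, hFcnorm]
      _ = (Fintype.card C : ℂ)⁻¹ * ∑ c : C, (H0 : ℂ) ^ (n - w c) * (H1 : ℂ) ^ (w c) := by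
          congr 1
          refine Finset.sum_congr rfl fun c _ => ?_
          -- factor the tsum
          have heq : ∀ x : Fin n → ℤ,
              Fc x * psi3 (∑ i, v x i * (c : Fin n → ZMod 3) i)
              = ∏ i, ((q : ℂ) ^ (x i).natAbs *
                  psi3 (((x i : ℤ) : ZMod 3) * (c : Fin n → ZMod 3) i)) := by
            intro x
            rw [Finset.prod_mul_distrib, Finset.prod_pow_eq_pow_sum,
              ← addChar_map_sum]
          have hfnorm : ∀ i : Fin n, Summable fun m : ℤ =>
              ‖(q : ℂ) ^ m.natAbs * psi3 ((m : ZMod 3) * (c : Fin n → ZMod 3) i)‖ := by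
            intro i
            refine (summable_int_qpow hq0 hq1).congr fun m => ?_
            rw [norm_mul, psi3_norm, mul_one, norm_pow, Complex.norm_real,
              Real.norm_of_nonneg hq0]
          rw [tsum_congr heq, tsum_pi_prod (f := fun (i : Fin n) (m : ℤ) =>
            (q : ℂ) ^ m.natAbs * psi3 ((m : ZMod 3) * (c : Fin n → ZMod 3) i)) hfnorm]
          have hone : ∀ i : Fin n,
              (∑' m : ℤ, (q : ℂ) ^ m.natAbs *
                psi3 ((m : ZMod 3) * (c : Fin n → ZMod 3) i))
              = if (c : Fin n → ZMod 3) i = 0 then ((H0 : ℝ) : ℂ) else ((H1 : ℝ) : ℂ) := by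
            intro i
            by_cases hci : (c : Fin n → ZMod 3) i = 0
            · rw [if_pos hci, hci, hval0 hq0 hq1]
            · rw [if_neg hci, hval1 hq0 hq1 hci]
          rw [Finset.prod_congr rfl fun i _ => hone i]
          rw [Finset.prod_ite, Finset.prod_const, Finset.prod_const]
          have hcard2 : (Finset.univ.filter fun i => ¬ (c : Fin n → ZMod 3) i = 0).card
              = w c := by
            simp only [hw, ne_eq]
          have hcards : (Finset.univ.filter fun i => (c : Fin n → ZMod 3) i = 0).card
              = n - w c := by
            have h1 := Finset.card_filter_add_card_filter_not
              (s := (Finset.univ : Finset (Fin n)))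
              (p := fun i => (c : Fin n → ZMod 3) i = 0)
            simp only [Finset.card_univ, Fintype.card_fin] at h1
            omega
          rw [hcards, hcard2]
  -- conclude over ℝ
  apply Complex.ofReal_injective
  have lhs_eq : (∑' x : {x : Fin n → ℤ //
        ∀ z ∈ C, ∑ i, ((x i : ℤ) : ZMod 3) * z i = 0},
        q ^ (∑ i, (x.val i).natAbs)) = ∑' x : s, Fr x := rfl
  rw [lhs_eq, main]
  rw [tsum_fintype, Nat.card_eq_fintype_card]
  push_cast
  rw [Finset.sum_congr rfl (fun c _ => rfl : ∀ c ∈ Finset.univ,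
    ((H0:ℂ) ^ (n - w c) * (H1:ℂ) ^ (w c)) = _)]
  ring
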